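/- If P is a downset of permutations that is not equal to the set of all permutations, then there exists a constant c > 1 such that f_P(n) < cⁿ for every n ∈ ℕ. -/

import Mathlib

/-- Pattern containment of permutations: `π ≺ ρ` iff some strictly increasing
injection transports the relative order of values of `π` to that of `ρ`. -/
def PermLE {m n : ℕ} (π : Equiv.Perm (Fin m)) (ρ : Equiv.Perm (Fin n)) : Prop :=
  ∃ f : Fin m → Fin n, StrictMono f ∧ ∀ r s : Fin m, π r < π s ↔ ρ (f r) < ρ (f s)

open Finset

/-- A finset matrix (set of 1-cells) contains the pattern of permutation `σ`. -/
def MContains {k : ℕ} (σ : Equiv.Perm (Fin k)) (A : Finset (ℕ × ℕ)) : Prop :=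
  ∃ r c : Fin k → ℕ, StrictMono r ∧ StrictMono c ∧ ∀ i, (r i, c (σ i)) ∈ A

lemma div_lt_of_div_lt {K a b : ℕ} (h : a / K < b / K) : a < b := by
  by_contra hc
  exact absurd (Nat.div_le_div_right (Nat.le_of_not_lt hc)) (Nat.not_le_of_lt h)

/-- contraction by blocks of size K preserves avoidance -/
lemma contract_avoid {k K : ℕ} (σ : Equiv.Perm (Fin k)) (A : Finset (ℕ × ℕ))
    (h : ¬ MContains σ A) :
    ¬ MContains σ (A.image (fun p => (p.1 / K, p.2 / K))) := by
  rintro ⟨r, c, hr, hc, hmem⟩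
  apply h
  have hex : ∀ i : Fin k, ∃ p : ℕ × ℕ, p ∈ A ∧ p.1 / K = r i ∧ p.2 / K = c (σ i) := by
    intro i
    obtain ⟨p, hp, he⟩ := Finset.mem_image.mp (hmem i)
    exact ⟨p, hp, by simpa using congrArg Prod.fst he, by simpa using congrArg Prod.snd he⟩
  choose p hpA hp1 hp2 using hex
  refine ⟨fun i => (p i).1, fun j => (p (σ.symm j)).2, ?_, ?_, ?_⟩
  · intro i j hij
    apply div_lt_of_div_lt (K := K)
    rw [hp1 i, hp1 j]; exact hr hij
  · intro i j hij
    apply div_lt_of_div_lt (K := K)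
    rw [hp2 (σ.symm i), hp2 (σ.symm j)]
    simp only [Equiv.apply_symm_apply]
    exact hc hij
  · intro i
    simpa using hpA i

/-- transpose -/
def MT (A : Finset (ℕ × ℕ)) : Finset (ℕ × ℕ) := A.image Prod.swap

lemma MT_MT (A : Finset (ℕ × ℕ)) : MT (MT A) = A := by
  simp [MT, Finset.image_image]

lemma contains_MT {k : ℕ} (σ : Equiv.Perm (Fin k)) (A : Finset (ℕ × ℕ))
    (h : MContains σ A) : MContains σ.symm (MT A) := by
  obtain ⟨r, c, hr, hc, hmem⟩ := h
  refine ⟨c, r, hc, hr, fun i => ?_⟩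
  have := hmem (σ.symm i)
  simp only [Equiv.apply_symm_apply] at this
  exact Finset.mem_image.mpr ⟨_, this, rfl⟩

lemma avoid_MT {k : ℕ} (σ : Equiv.Perm (Fin k)) (A : Finset (ℕ × ℕ))
    (h : ¬ MContains σ A) : ¬ MContains σ.symm (MT A) := by
  intro hco
  exact h (by simpa [MT_MT] using contains_MT σ.symm (MT A) hco)

/-- the set of block-rows `I < m` whose block `(I,J)` is "wide" (occupies ≥ k columns)
is small, in a matrix avoiding σ. -/
lemma wide_strip {k K m : ℕ} (hK : 0 < K) (σ : Equiv.Perm (Fin k)) (A : Finset (ℕ × ℕ))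
    (hav : ¬ MContains σ A) (J : ℕ) :
    (((range m)).filter (fun I =>
      k ≤ ((A.filter (fun p => p.1 / K = I ∧ p.2 / K = J)).image Prod.snd).card)).card
      ≤ (k - 1) * K.choose k := by
  classical
  by_contra hbig
  push_neg at hbig
  set W := ((range m)).filter (fun I =>
      k ≤ ((A.filter (fun p => p.1 / K = I ∧ p.2 / K = J)).image Prod.snd).card) with hW
  -- choose a k-subset of occupied columns for each wide block
  have hex : ∀ I : ℕ, ∃ S : Finset ℕ, I ∈ W →
      S ⊆ (A.filter (fun p => p.1 / K = I ∧ p.2 / K = J)).image Prod.snd ∧ S.card = k := by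
    intro I
    by_cases hI : I ∈ W
    · have hI' := hI
      rw [hW, Finset.mem_filter] at hI'
      obtain ⟨T, hT1, hT2⟩ := Finset.exists_subset_card_eq hI'.2
      exact ⟨T, fun _ => ⟨hT1, hT2⟩⟩
    · exact ⟨∅, fun h => absurd h hI⟩
  choose S hS using hex
  -- each chosen set lands in the k-subsets of the column interval
  have hmaps : ∀ I ∈ W, S I ∈ (Ico (J * K) (J * K + K)).powersetCard k := by
    intro I hI
    rw [Finset.mem_powersetCard]
    refine ⟨?_, (hS I hI).2⟩
    intro s hs
    have hs2 := (hS I hI).1 hs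
    obtain ⟨p, hp, hps⟩ := Finset.mem_image.mp hs2
    rw [Finset.mem_filter] at hp
    obtain ⟨-, -, hpJ⟩ := hp
    rw [Finset.mem_Ico]
    constructor
    · calc J * K = p.2 / K * K := by rw [hpJ]
        _ ≤ p.2 := Nat.div_mul_le_self _ _
        _ = s := hps
    · have : p.2 / K < J + 1 := by omega
      have := (Nat.div_lt_iff_lt_mul hK).mp this
      have he : (J + 1) * K = J * K + K := by ring
      omega
  have hcard_t : ((Ico (J * K) (J * K + K)).powersetCard k).card = K.choose k := by
    rw [Finset.card_powersetCard, Nat.card_Ico]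
    congr 1
    omega
  obtain ⟨S₀, hS₀t, hfib⟩ := Finset.exists_lt_card_fiber_of_mul_lt_card_of_maps_to hmaps
    (by rw [hcard_t, mul_comm]; exact hbig)
  set W' := W.filter (fun I => S I = S₀) with hW'
  have hk_le : k ≤ W'.card := by omega
  obtain ⟨W'', hW''sub, hW''card⟩ := Finset.exists_subset_card_eq hk_le
  have hS₀card : S₀.card = k := (Finset.mem_powersetCard.mp hS₀t).2
  set e := W''.orderEmbOfFin hW''card with he
  set cfun := S₀.orderEmbOfFin hS₀card with hcfun
  have hpt : ∀ i : Fin k, ∃ p : ℕ × ℕ, p ∈ A ∧ p.1 / K = e i ∧ p.2 = cfun (σ i) := by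
    intro i
    have heW' : (e i : ℕ) ∈ W' := hW''sub (Finset.orderEmbOfFin_mem _ _ _)
    have hSe : S (e i) = S₀ := (Finset.mem_filter.mp heW').2
    have heW0 : (e i : ℕ) ∈ W := (Finset.mem_filter.mp heW').1
    have hmemS : (cfun (σ i) : ℕ) ∈ S (e i) := by
      rw [hSe]; exact Finset.orderEmbOfFin_mem _ _ _
    have h2 := (hS _ heW0).1 hmemS
    obtain ⟨q, hq, hqs⟩ := Finset.mem_image.mp h2
    rw [Finset.mem_filter] at hq
    exact ⟨q, hq.1, hq.2.1, hqs⟩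
  choose p hpA hp1 hp3 using hpt
  apply hav
  refine ⟨fun i => (p i).1, fun j => cfun j, ?_, ?_, ?_⟩
  · intro i j hij
    apply div_lt_of_div_lt (K := K)
    rw [hp1 i, hp1 j]
    exact e.strictMono hij
  · intro i j hij
    exact cfun.strictMono hij
  · intro i
    have h3 := hp3 i
    have := hpA i
    simp only []
    rw [← h3]
    simpa using this

lemma MT_filter_image {K : ℕ} (A : Finset (ℕ × ℕ)) (I J : ℕ) :
    ((MT A).filter (fun p => p.1 / K = I ∧ p.2 / K = J)).image Prod.snd
      = (A.filter (fun p => p.1 / K = J ∧ p.2 / K = I)).image Prod.fst := by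
  ext x
  simp only [MT, Finset.mem_image, Finset.mem_filter, Finset.image_image]
  constructor
  · rintro ⟨p, ⟨⟨q, hq, rfl⟩, h1, h2⟩, rfl⟩
    exact ⟨q, ⟨hq, h2, h1⟩, rfl⟩
  · rintro ⟨q, ⟨hq, h1, h2⟩, rfl⟩
    exact ⟨q.swap, ⟨⟨q, hq, rfl⟩, h2, h1⟩, rfl⟩

/-- Füredi–Hajnal for side lengths that are powers of K = k². -/
lemma FH_pow {k : ℕ} (hk : 2 ≤ k) (σ : Equiv.Perm (Fin k)) :
    ∀ (t : ℕ) (A : Finset (ℕ × ℕ)), A ⊆ range ((k^2)^t) ×ˢ range ((k^2)^t) →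
    ¬ MContains σ A →
    A.card ≤ (2 * (k^2)^2 * (k-1) * ((k^2).choose k)) * (k^2)^t := by
  set K := k ^ 2 with hKdef
  have hKpos : 0 < K := by positivity
  have hkK : k ≤ K := Nat.le_self_pow two_ne_zero k
  set c := 2 * K^2 * (k-1) * (K.choose k) with hcdef
  have hcpos : 0 < c := by
    have h1 : 0 < K.choose k := Nat.choose_pos hkK
    have h2 : 0 < k - 1 := by omega
    positivity
  intro t
  induction t with
  | zero =>
    intro A hsub hav
    simp only [pow_zero] at hsub ⊢
    calc A.card ≤ ((range 1) ×ˢ (range 1)).card := Finset.card_le_card hsub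
      _ = 1 := by simp
      _ ≤ c * 1 := by omega
  | succ t IH =>
    intro A hsub hav
    set m := K ^ t with hm
    have hNm : K ^ (t+1) = m * K := by rw [hm, pow_succ]
    -- the contracted matrix
    set B := A.image (fun p => (p.1 / K, p.2 / K)) with hB
    have hmemA : ∀ p ∈ A, p.1 / K < m ∧ p.2 / K < m := by
      intro p hp
      have := hsub hp
      rw [Finset.mem_product, Finset.mem_range, Finset.mem_range, hNm] at this
      exact ⟨(Nat.div_lt_iff_lt_mul hKpos).mpr this.1, (Nat.div_lt_iff_lt_mul hKpos).mpr this.2⟩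
    have hBsub : B ⊆ range m ×ˢ range m := by
      intro b hb
      obtain ⟨p, hp, rfl⟩ := Finset.mem_image.mp hb
      rw [Finset.mem_product, Finset.mem_range, Finset.mem_range]
      exact hmemA p hp
    have hBav : ¬ MContains σ B := contract_avoid σ A hav
    have hBcard : B.card ≤ c * m := IH B hBsub hBav
    -- fiberwise decomposition of A over blocks
    have hfib : A.card = ∑ b ∈ range m ×ˢ range m,
        (A.filter (fun p => (p.1 / K, p.2 / K) = b)).card := by
      apply Finset.card_eq_sum_card_fiberwise
      intro p hp
      simp only [Finset.mem_coe, Finset.mem_product, Finset.mem_range] at hp ⊢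
      exact hmemA p hp
    -- notation for blocks
    have hblock_eq : ∀ b : ℕ × ℕ, A.filter (fun p => (p.1 / K, p.2 / K) = b)
        = A.filter (fun p => p.1 / K = b.1 ∧ p.2 / K = b.2) := by
      intro b
      apply Finset.filter_congr
      intro p _
      simp [Prod.ext_iff]
    -- pointwise bound on each block
    have hpoint : ∀ b ∈ range m ×ˢ range m,
        (A.filter (fun p => p.1 / K = b.1 ∧ p.2 / K = b.2)).card ≤
          (if k ≤ ((A.filter (fun p => p.1 / K = b.1 ∧ p.2 / K = b.2)).image Prod.snd).card
            then K^2 else 0)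
          + (if k ≤ ((A.filter (fun p => p.1 / K = b.1 ∧ p.2 / K = b.2)).image Prod.fst).card
            then K^2 else 0)
          + (if b ∈ B then (k-1)^2 else 0) := by
      intro b _
      set blk := A.filter (fun p => p.1 / K = b.1 ∧ p.2 / K = b.2) with hblk
      have hsq : blk.card ≤ K^2 := by
        have hsub2 : blk ⊆ (Ico (b.1*K) (b.1*K+K)) ×ˢ (Ico (b.2*K) (b.2*K+K)) := by
          intro p hp
          rw [hblk, Finset.mem_filter] at hp
          obtain ⟨-, h1, h2⟩ := hp
          rw [Finset.mem_product, Finset.mem_Ico, Finset.mem_Ico]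
          have e1 : (b.1+1) * K = b.1*K + K := by ring
          have e2 : (b.2+1) * K = b.2*K + K := by ring
          have l1 : p.1 / K < b.1 + 1 := by omega
          have l2 : p.2 / K < b.2 + 1 := by omega
          have l1' := (Nat.div_lt_iff_lt_mul hKpos).mp l1
          have l2' := (Nat.div_lt_iff_lt_mul hKpos).mp l2
          have g1 : b.1 * K ≤ p.1 := by
            calc b.1 * K = p.1 / K * K := by rw [h1]
              _ ≤ p.1 := Nat.div_mul_le_self _ _
          have g2 : b.2 * K ≤ p.2 := by
            calc b.2 * K = p.2 / K * K := by rw [h2]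
              _ ≤ p.2 := Nat.div_mul_le_self _ _
          exact ⟨⟨g1, by omega⟩, ⟨g2, by omega⟩⟩
        calc blk.card ≤ _ := Finset.card_le_card hsub2
          _ ≤ K^2 := by
            rw [Finset.card_product, Nat.card_Ico, Nat.card_Ico]
            simp [pow_two]
      by_cases h1 : k ≤ (blk.image Prod.snd).card
      · rw [if_pos h1]
        omega
      rw [if_neg h1]
      by_cases h2 : k ≤ (blk.image Prod.fst).card
      · rw [if_pos h2]
        omega
      rw [if_neg h2]
      by_cases h3 : b ∈ B
      · rw [if_pos h3]
        have hsubRC : blk ⊆ (blk.image Prod.fst) ×ˢ (blk.image Prod.snd) := by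
          intro p hp
          rw [Finset.mem_product]
          exact ⟨Finset.mem_image_of_mem _ hp, Finset.mem_image_of_mem _ hp⟩
        have : blk.card ≤ (k-1) * (k-1) :=
          calc blk.card ≤ _ := Finset.card_le_card hsubRC
          _ = (blk.image Prod.fst).card * (blk.image Prod.snd).card := Finset.card_product _ _
          _ ≤ (k-1) * (k-1) := Nat.mul_le_mul (by omega) (by omega)
        have hpow : (k-1) * (k-1) = (k-1)^2 := (pow_two _).symm
        omega
      · rw [if_neg h3]
        have : blk = ∅ := by
          rw [Finset.eq_empty_iff_forall_notMem]
          intro p hp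
          rw [hblk, Finset.mem_filter] at hp
          apply h3
          rw [hB]
          apply Finset.mem_image.mpr
          exact ⟨p, hp.1, by rw [Prod.ext_iff]; exact ⟨hp.2.1, hp.2.2⟩⟩
        simp [this]
    -- counting wide blocks
    have hwideN : (((range m ×ˢ range m)).filter (fun b =>
        k ≤ ((A.filter (fun p => p.1 / K = b.1 ∧ p.2 / K = b.2)).image Prod.snd).card)).card
        ≤ m * ((k-1) * K.choose k) := by
      rw [Finset.card_eq_sum_card_fiberwise (f := Prod.snd) (t := range m)
        (fun b hb => (Finset.mem_product.mp (Finset.mem_filter.mp hb).1).2)]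
      have hb : ∀ J ∈ range m,
          ((((range m ×ˢ range m)).filter (fun b =>
            k ≤ ((A.filter (fun p => p.1 / K = b.1 ∧ p.2 / K = b.2)).image Prod.snd).card)).filter
            (fun b => b.2 = J)).card ≤ (k-1) * K.choose k := by
        intro J hJ
        refine le_trans (Finset.card_le_card_of_injOn Prod.fst ?_ ?_) (wide_strip (m := m) hKpos σ A hav J)
        · intro b hb
          rw [Finset.mem_coe, Finset.mem_filter, Finset.mem_filter] at hb
          obtain ⟨⟨hbp, hbw⟩, hbJ⟩ := hb
          rw [Finset.mem_coe, Finset.mem_filter]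
          refine ⟨(Finset.mem_product.mp hbp).1, ?_⟩
          rw [← hbJ]
          exact hbw
        · intro b hb b' hb' hfst
          rw [Finset.mem_coe, Finset.mem_filter] at hb hb'
          exact Prod.ext hfst (hb.2.trans hb'.2.symm)
      calc ∑ J ∈ range m, _ ≤ (range m).card * ((k-1) * K.choose k) := by
            apply le_trans (Finset.sum_le_card_nsmul _ _ _ hb)
            rw [smul_eq_mul]
          _ = m * ((k-1) * K.choose k) := by rw [Finset.card_range]
    -- counting tall blocks (via transpose)
    have hMTav : ¬ MContains σ.symm (MT A) := avoid_MT σ A hav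
    have htallN : (((range m ×ˢ range m)).filter (fun b =>
        k ≤ ((A.filter (fun p => p.1 / K = b.1 ∧ p.2 / K = b.2)).image Prod.fst).card)).card
        ≤ m * ((k-1) * K.choose k) := by
      rw [Finset.card_eq_sum_card_fiberwise (f := Prod.fst) (t := range m)
        (fun b hb => (Finset.mem_product.mp (Finset.mem_filter.mp hb).1).1)]
      have hb : ∀ I ∈ range m,
          ((((range m ×ˢ range m)).filter (fun b =>
            k ≤ ((A.filter (fun p => p.1 / K = b.1 ∧ p.2 / K = b.2)).image Prod.fst).card)).filter
            (fun b => b.1 = I)).card ≤ (k-1) * K.choose k := by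
        intro I hI
        have hws := wide_strip (m := m) hKpos σ.symm (MT A) hMTav I
        have hrw : ∀ I' : ℕ, ((MT A).filter (fun p => p.1 / K = I' ∧ p.2 / K = I)).image Prod.snd
            = (A.filter (fun p => p.1 / K = I ∧ p.2 / K = I')).image Prod.fst :=
          fun I' => MT_filter_image A I' I
        refine le_trans (Finset.card_le_card_of_injOn Prod.snd ?_ ?_) hws
        · intro b hb
          rw [Finset.mem_coe, Finset.mem_filter, Finset.mem_filter] at hb
          obtain ⟨⟨hbp, hbw⟩, hbI⟩ := hb
          rw [Finset.mem_coe, Finset.mem_filter]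
          refine ⟨(Finset.mem_product.mp hbp).2, ?_⟩
          rw [hrw b.2, ← hbI]
          exact hbw
        · intro b hb b' hb' hsnd
          rw [Finset.mem_coe, Finset.mem_filter] at hb hb'
          exact Prod.ext (hb.2.trans hb'.2.symm) hsnd
      calc ∑ I ∈ range m, _ ≤ (range m).card * ((k-1) * K.choose k) := by
            apply le_trans (Finset.sum_le_card_nsmul _ _ _ hb)
            rw [smul_eq_mul]
          _ = m * ((k-1) * K.choose k) := by rw [Finset.card_range]
    -- assemble
    have hsum1 : ∀ (s : Finset (ℕ × ℕ)) (P : ℕ × ℕ → Prop) [DecidablePred P] (x : ℕ),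
        ∑ b ∈ s, (if P b then x else 0) = (s.filter P).card * x := by
      intro s P _ x
      rw [← Finset.sum_filter, Finset.sum_const, smul_eq_mul]
    have hfinal : A.card ≤ m * ((k-1) * K.choose k) * K^2 + m * ((k-1) * K.choose k) * K^2
        + (c * m) * (k-1)^2 := by
      calc A.card = ∑ b ∈ range m ×ˢ range m,
            (A.filter (fun p => (p.1 / K, p.2 / K) = b)).card := hfib
        _ = ∑ b ∈ range m ×ˢ range m,
            (A.filter (fun p => p.1 / K = b.1 ∧ p.2 / K = b.2)).card := by
            exact Finset.sum_congr rfl (fun b _ => by rw [hblock_eq b])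
        _ ≤ ∑ b ∈ range m ×ˢ range m,
            ((if k ≤ ((A.filter (fun p => p.1 / K = b.1 ∧ p.2 / K = b.2)).image Prod.snd).card
              then K^2 else 0)
            + (if k ≤ ((A.filter (fun p => p.1 / K = b.1 ∧ p.2 / K = b.2)).image Prod.fst).card
              then K^2 else 0)
            + (if b ∈ B then (k-1)^2 else 0)) := Finset.sum_le_sum hpoint
        _ = _ + _ + _ := by rw [Finset.sum_add_distrib]; rw [Finset.sum_add_distrib]
        _ ≤ m * ((k-1) * K.choose k) * K^2 + m * ((k-1) * K.choose k) * K^2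
            + (c * m) * (k-1)^2 := by
            rw [hsum1, hsum1, hsum1]
            refine Nat.add_le_add (Nat.add_le_add ?_ ?_) ?_
            · exact Nat.mul_le_mul_right _ hwideN
            · exact Nat.mul_le_mul_right _ htallN
            · refine Nat.mul_le_mul_right _ ?_
              refine le_trans (Finset.card_le_card ?_) hBcard
              intro b hb
              exact (Finset.mem_filter.mp hb).2
    have key : 1 + (k-1)^2 ≤ K := by
      obtain ⟨a, rfl⟩ : ∃ a, k = a + 1 := ⟨k-1, by omega⟩
      rw [hKdef]
      simp only [Nat.add_sub_cancel]
      nlinarith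
    calc A.card ≤ _ := hfinal
      _ = c * m * (1 + (k-1)^2) := by rw [hcdef]; ring
      _ ≤ c * m * K := Nat.mul_le_mul_left _ key
      _ = c * K^(t+1) := by rw [hNm]; ring

/-- Füredi–Hajnal: linear bound for every side length. -/
lemma FH_lin {k : ℕ} (hk : 2 ≤ k) (σ : Equiv.Perm (Fin k)) (n : ℕ) (A : Finset (ℕ × ℕ))
    (hsub : A ⊆ range n ×ˢ range n) (hav : ¬ MContains σ A) :
    A.card ≤ (2 * (k^2)^2 * (k-1) * ((k^2).choose k) * k^2) * n := by
  rcases Nat.eq_zero_or_pos n with rfl | hn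
  · have : A = ∅ := by
      rw [← Finset.subset_empty]
      simpa using hsub
    simp [this]
  · have hK1 : 1 < k^2 := by nlinarith
    set t := Nat.log (k^2) n + 1 with ht
    have h1 : n ≤ (k^2) ^ t := le_of_lt (Nat.lt_pow_succ_log_self hK1 n)
    have h2 : (k^2) ^ t ≤ k^2 * n := by
      rw [ht, pow_succ, mul_comm]
      exact Nat.mul_le_mul_left _ (Nat.pow_log_le_self _ (by omega))
    have hsub2 : A ⊆ range ((k^2)^t) ×ˢ range ((k^2)^t) := by
      refine subset_trans hsub (Finset.product_subset_product ?_ ?_) <;>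
        exact Finset.range_subset_range.mpr h1
    calc A.card ≤ (2 * (k^2)^2 * (k-1) * ((k^2).choose k)) * (k^2)^t :=
          FH_pow hk σ t A hsub2 hav
      _ ≤ (2 * (k^2)^2 * (k-1) * ((k^2).choose k)) * (k^2 * n) := Nat.mul_le_mul_left _ h2
      _ = (2 * (k^2)^2 * (k-1) * ((k^2).choose k) * k^2) * n := by ring

open Classical in
/-- the finset of n×n 0-1 matrices avoiding σ -/
noncomputable def AvSet {k : ℕ} (σ : Equiv.Perm (Fin k)) (n : ℕ) : Finset (Finset (ℕ × ℕ)) :=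
  ((range n ×ˢ range n).powerset).filter (fun A => ¬ MContains σ A)

lemma AvSet_mono {k : ℕ} (σ : Equiv.Perm (Fin k)) {n n' : ℕ} (h : n ≤ n') :
    AvSet σ n ⊆ AvSet σ n' := by
  classical
  intro A hA
  rw [AvSet, Finset.mem_filter, Finset.mem_powerset] at hA ⊢
  refine ⟨subset_trans hA.1 (Finset.product_subset_product ?_ ?_), hA.2⟩ <;>
    exact Finset.range_subset_range.mpr h

lemma AvSet_step {k : ℕ} (hk : 2 ≤ k) (σ : Equiv.Perm (Fin k)) (N : ℕ) :
    (AvSet σ (2 * N)).card ≤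
      (AvSet σ N).card * 2 ^ (4 * ((2 * (k^2)^2 * (k-1) * ((k^2).choose k) * k^2) * N)) := by
  classical
  set cL := 2 * (k^2)^2 * (k-1) * ((k^2).choose k) * k^2 with hcL
  have hmaps : ∀ A ∈ AvSet σ (2 * N), A.image (fun p => (p.1 / 2, p.2 / 2)) ∈ AvSet σ N := by
    intro A hA
    rw [AvSet, Finset.mem_filter, Finset.mem_powerset] at hA ⊢
    constructor
    · intro b hb
      obtain ⟨p, hp, rfl⟩ := Finset.mem_image.mp hb
      have := hA.1 hp
      rw [Finset.mem_product, Finset.mem_range, Finset.mem_range] at this ⊢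
      constructor <;> [have h := this.1; have h := this.2] <;> omega
    · exact contract_avoid σ A hA.2
  rw [Finset.card_eq_sum_card_fiberwise hmaps]
  have hfiber : ∀ B ∈ AvSet σ N,
      ((AvSet σ (2*N)).filter (fun A => A.image (fun p => (p.1 / 2, p.2 / 2)) = B)).card
        ≤ 2 ^ (4 * (cL * N)) := by
    intro B hB
    rw [AvSet, Finset.mem_filter, Finset.mem_powerset] at hB
    have hBcard : B.card ≤ cL * N := FH_lin hk σ N B hB.1 hB.2
    set U := B.biUnion (fun b => (Ico (2*b.1) (2*b.1+2)) ×ˢ (Ico (2*b.2) (2*b.2+2))) with hU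
    have hUcard : U.card ≤ 4 * B.card := by
      calc U.card ≤ ∑ b ∈ B, ((Ico (2*b.1) (2*b.1+2)) ×ˢ (Ico (2*b.2) (2*b.2+2))).card :=
            Finset.card_biUnion_le
        _ ≤ ∑ _b ∈ B, 4 := by
            refine Finset.sum_le_sum (fun b _ => ?_)
            have e1 : 2*b.1+2 - 2*b.1 = 2 := by omega
            have e2 : 2*b.2+2 - 2*b.2 = 2 := by omega
            rw [Finset.card_product, Nat.card_Ico, Nat.card_Ico, e1, e2]
        _ = 4 * B.card := by rw [Finset.sum_const, smul_eq_mul, mul_comm]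
    have hsubU : ((AvSet σ (2*N)).filter (fun A => A.image (fun p => (p.1 / 2, p.2 / 2)) = B))
        ⊆ U.powerset := by
      intro A hA
      rw [Finset.mem_filter] at hA
      rw [Finset.mem_powerset]
      intro p hp
      have hpb : (p.1 / 2, p.2 / 2) ∈ B := by
        rw [← hA.2]
        exact Finset.mem_image_of_mem _ hp
      rw [hU]
      apply Finset.mem_biUnion.mpr
      refine ⟨(p.1 / 2, p.2 / 2), hpb, ?_⟩
      rw [Finset.mem_product, Finset.mem_Ico, Finset.mem_Ico]
      have a1 := Nat.div_add_mod p.1 2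
      have a2 := Nat.div_add_mod p.2 2
      have b1 : p.1 % 2 < 2 := Nat.mod_lt _ (by omega)
      have b2 : p.2 % 2 < 2 := Nat.mod_lt _ (by omega)
      simp only []
      omega
    calc _ ≤ U.powerset.card := Finset.card_le_card hsubU
      _ = 2 ^ U.card := Finset.card_powerset U
      _ ≤ 2 ^ (4 * (cL * N)) := Nat.pow_le_pow_right (by omega) (by omega)
  calc _ ≤ (AvSet σ N).card • 2 ^ (4 * (cL * N)) := Finset.sum_le_card_nsmul _ _ _ hfiber
    _ = (AvSet σ N).card * 2 ^ (4 * (cL * N)) := by rw [smul_eq_mul]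
    _ = _ := by rw [hcL, mul_assoc]

lemma AvSet_pow2 {k : ℕ} (hk : 2 ≤ k) (σ : Equiv.Perm (Fin k)) :
    ∀ t : ℕ, (AvSet σ (2^t)).card ≤
      2 * 2 ^ (4 * ((2 * (k^2)^2 * (k-1) * ((k^2).choose k) * k^2) * 2^t)) := by
  classical
  set cL := 2 * (k^2)^2 * (k-1) * ((k^2).choose k) * k^2 with hcL
  intro t
  induction t with
  | zero =>
    have h1 : AvSet σ (2^0) ⊆ (range 1 ×ˢ range 1).powerset := by
      rw [AvSet]
      intro A hA
      exact (Finset.mem_filter.mp hA).1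
    calc (AvSet σ (2^0)).card ≤ ((range 1 ×ˢ range 1).powerset).card := Finset.card_le_card h1
      _ = 2 := by simp
      _ ≤ 2 * 2 ^ (4 * (cL * 2^0)) := by
          have : (1:ℕ) ≤ 2 ^ (4 * (cL * 2^0)) := Nat.one_le_two_pow
          omega
  | succ t IH =>
    have h2 : (2:ℕ)^(t+1) = 2 * 2^t := by rw [pow_succ]; ring
    have hexp : 4 * (cL * 2^t) + 4 * (cL * 2^t) = 4 * (cL * 2^(t+1)) := by
      rw [h2]; ring
    calc (AvSet σ (2^(t+1))).card = (AvSet σ (2 * 2^t)).card := by rw [h2]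
      _ ≤ (AvSet σ (2^t)).card * 2 ^ (4 * (cL * 2^t)) := by
          have := AvSet_step hk σ (2^t)
          rw [← hcL] at this
          exact this
      _ ≤ (2 * 2 ^ (4 * (cL * 2^t))) * 2 ^ (4 * (cL * 2^t)) :=
          Nat.mul_le_mul_right _ IH
      _ = 2 * 2 ^ (4 * (cL * 2^(t+1))) := by
          rw [← hexp, pow_add]; ring

lemma AvSet_count {k : ℕ} (hk : 2 ≤ k) (σ : Equiv.Perm (Fin k)) (n : ℕ) (hn : 1 ≤ n) :
    (AvSet σ n).card ≤
      2 * (2 ^ (8 * (2 * (k^2)^2 * (k-1) * ((k^2).choose k) * k^2))) ^ n := by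
  classical
  set cL := 2 * (k^2)^2 * (k-1) * ((k^2).choose k) * k^2 with hcL
  set t := Nat.log 2 n + 1 with ht
  have h1 : n ≤ 2 ^ t := le_of_lt (Nat.lt_pow_succ_log_self (by omega) n)
  have h2 : 2 ^ t ≤ 2 * n := by
    rw [ht, pow_succ, mul_comm]
    exact Nat.mul_le_mul_left _ (Nat.pow_log_le_self _ (by omega))
  calc (AvSet σ n).card ≤ (AvSet σ (2^t)).card := Finset.card_le_card (AvSet_mono σ h1)
    _ ≤ 2 * 2 ^ (4 * (cL * 2^t)) := AvSet_pow2 hk σ t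
    _ ≤ 2 * 2 ^ (4 * (cL * (2 * n))) := by
        have : 4 * (cL * 2^t) ≤ 4 * (cL * (2*n)) :=
          Nat.mul_le_mul_left _ (Nat.mul_le_mul_left _ h2)
        have := Nat.pow_le_pow_right (show 1 ≤ 2 by omega) this
        omega
    _ = 2 * (2 ^ (8 * cL)) ^ n := by
        rw [← pow_mul]
        congr 2
        ring

/-- the permutation matrix of ρ, as a finset of cells -/
def permMatrix {n : ℕ} (ρ : Equiv.Perm (Fin n)) : Finset (ℕ × ℕ) :=
  (Finset.univ : Finset (Fin n)).image (fun i => (i.val, (ρ i).val))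

lemma permMatrix_mem_powerset {n : ℕ} (ρ : Equiv.Perm (Fin n)) :
    permMatrix ρ ⊆ range n ×ˢ range n := by
  intro p hp
  obtain ⟨i, -, rfl⟩ := Finset.mem_image.mp hp
  rw [Finset.mem_product, Finset.mem_range, Finset.mem_range]
  exact ⟨i.2, (ρ i).2⟩

lemma permMatrix_inj {n : ℕ} (ρ ρ' : Equiv.Perm (Fin n))
    (h : permMatrix ρ = permMatrix ρ') : ρ = ρ' := by
  ext i
  have : (i.val, (ρ i).val) ∈ permMatrix ρ' := by
    rw [← h]
    exact Finset.mem_image_of_mem _ (Finset.mem_univ i)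
  obtain ⟨j, -, hj⟩ := Finset.mem_image.mp this
  have h1 : (j : ℕ) = (i : ℕ) := by simpa using congrArg Prod.fst hj
  have h2 : (ρ' j : ℕ) = (ρ i : ℕ) := by simpa using congrArg Prod.snd hj
  have : j = i := Fin.ext h1
  rw [this] at h2
  exact h2.symm

lemma contains_iff_permLE {k n : ℕ} (π : Equiv.Perm (Fin k)) (ρ : Equiv.Perm (Fin n)) :
    MContains π (permMatrix ρ) ↔ PermLE π ρ := by
  constructor
  · rintro ⟨r, c, hr, hc, hmem⟩
    have hex : ∀ i : Fin k, ∃ x : Fin n, (x : ℕ) = r i ∧ (ρ x : ℕ) = c (π i) := by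
      intro i
      obtain ⟨x, -, hx⟩ := Finset.mem_image.mp (hmem i)
      exact ⟨x, by simpa using congrArg Prod.fst hx, by simpa using congrArg Prod.snd hx⟩
    choose x hx1 hx2 using hex
    refine ⟨x, ?_, ?_⟩
    · intro i j hij
      have : (x i : ℕ) < (x j : ℕ) := by rw [hx1 i, hx1 j]; exact hr hij
      exact this
    · intro s t
      calc π s < π t ↔ c (π s) < c (π t) := hc.lt_iff_lt.symm
        _ ↔ ((ρ (x s)) : ℕ) < ((ρ (x t)) : ℕ) := by rw [hx2 s, hx2 t]
        _ ↔ ρ (x s) < ρ (x t) := Iff.rfl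
  · rintro ⟨f, hf, hiff⟩
    refine ⟨fun i => (f i : ℕ), fun j => (ρ (f (π.symm j)) : ℕ), ?_, ?_, ?_⟩
    · intro i j hij
      exact hf hij
    · intro i j hij
      have : π (π.symm i) < π (π.symm j) := by
        rw [Equiv.apply_symm_apply, Equiv.apply_symm_apply]; exact hij
      exact (hiff _ _).mp this
    · intro i
      simp only [Equiv.symm_apply_apply]
      exact Finset.mem_image_of_mem _ (Finset.mem_univ (f i))

lemma perm_count {k n : ℕ} (π : Equiv.Perm (Fin k)) :
    ({ρ : Equiv.Perm (Fin n) | ¬ PermLE π ρ}).ncard ≤ (AvSet π n).card := by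
  classical
  set s : Set (Equiv.Perm (Fin n)) := {ρ | ¬ PermLE π ρ} with hs
  have hfin : s.Finite := Set.toFinite s
  rw [Set.ncard_eq_toFinset_card s hfin]
  apply Finset.card_le_card_of_injOn permMatrix
  · intro ρ hρ
    rw [Finset.mem_coe, Set.Finite.mem_toFinset, hs, Set.mem_setOf_eq] at hρ
    rw [Finset.mem_coe, AvSet, Finset.mem_filter, Finset.mem_powerset]
    exact ⟨permMatrix_mem_powerset ρ, fun hc => hρ ((contains_iff_permLE π ρ).mp hc)⟩
  · intro ρ _ ρ' _ h
    exact permMatrix_inj _ _ h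

lemma two_mul_pow_lt {C n : ℕ} (hC : 1 ≤ C) (hn : 1 ≤ n) : 2 * C ^ n < (2*C+1)^n := by
  obtain ⟨s, rfl⟩ : ∃ s, n = s + 1 := ⟨n-1, by omega⟩
  have hpos : 0 < C^s := pow_pos (by omega) s
  calc 2 * C^(s+1) = (2*C) * C^s := by ring
    _ < (2*C+1) * C^s := by nlinarith
    _ ≤ (2*C+1) * (2*C+1)^s := Nat.mul_le_mul_left _ (Nat.pow_le_pow_left (by omega) s)
    _ = (2*C+1)^(s+1) := (pow_succ' _ _).symm

/-- Marcus–Tardos theorem (Stanley–Wilf conjecture).  Every downset of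
permutations other than the set of all permutations grows at most exponentially. -/
theorem stmt_4 (P : ∀ n : ℕ, Set (Equiv.Perm (Fin n)))
    (hdown : ∀ (m n : ℕ) (π : Equiv.Perm (Fin m)) (ρ : Equiv.Perm (Fin n)),
      PermLE π ρ → ρ ∈ P n → π ∈ P m)
    (hproper : ∃ (n : ℕ) (π : Equiv.Perm (Fin n)), π ∉ P n) :
    ∃ c : ℝ, 1 < c ∧ ∀ n : ℕ, 1 ≤ n → ((P n).ncard : ℝ) < c ^ n := by

  obtain ⟨k, π, hπ⟩ := hproper
  by_cases hk : 2 ≤ k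
  · -- main case : Marcus–Tardos machinery
    set C := 2 ^ (8 * (2 * (k^2)^2 * (k-1) * ((k^2).choose k) * k^2)) with hC
    have hC1 : 1 ≤ C := Nat.one_le_two_pow
    refine ⟨((2*C+1 : ℕ) : ℝ), ?_, ?_⟩
    · exact_mod_cast (by omega : 1 < 2*C+1)
    · intro n hn
      have hsubset : P n ⊆ {ρ : Equiv.Perm (Fin n) | ¬ PermLE π ρ} := by
        intro ρ hρ hPL
        exact hπ (hdown k n π ρ hPL hρ)
      have h1 : (P n).ncard ≤ ({ρ : Equiv.Perm (Fin n) | ¬ PermLE π ρ}).ncard :=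
        Set.ncard_le_ncard hsubset (Set.toFinite _)
      have h2 := perm_count (n := n) π
      have h3 := AvSet_count hk π n hn
      rw [← hC] at h3
      have h4 : (P n).ncard < (2*C+1)^n := by
        have := two_mul_pow_lt hC1 hn
        omega
      calc ((P n).ncard : ℝ) < (((2*C+1)^n : ℕ) : ℝ) := by exact_mod_cast h4
        _ = ((2*C+1 : ℕ) : ℝ) ^ n := by push_cast; ring
  · -- degenerate case : P n is empty for n ≥ 1
    refine ⟨2, by norm_num, ?_⟩
    intro n hn
    have hempty : P n = ∅ := by
      rw [Set.eq_empty_iff_forall_notMem]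
      intro ρ hρ
      apply hπ
      refine hdown k n π ρ ⟨fun i => ⟨(i : ℕ), by omega⟩, ?_, ?_⟩ hρ
      · intro i j hij
        have hi := i.2
        have hj := j.2
        have := Fin.lt_def.mp hij
        omega
      · intro r s
        have : r = s := by
          apply Fin.ext
          have := r.2
          have := s.2
          omega
        rw [this]
        simp
    rw [hempty]
    simp only [Set.ncard_empty, Nat.cast_zero]
    positivity
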